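/- arXiv:1307.3379 — 5 statements merged into one kernel-verified Lean document; each statement's English description precedes it below -/
import Mathlib

section
/- Let A be a commutative ring, Y ⊆ X = Spec A a closed subscheme defined by an ideal I, and Y_n the n-th infinitesimal thickening defined by I^n. Suppose the colimit functor colim Y_* (on commutative algebras, B ↦ colim_n Hom(A/I^n, B)) is representable by a scheme Z of finite type. Then there exists N such that Y_N = Y_m for all m ≥ N, i.e., I^N = I^{N+1}, and Z = Y_N. -/
/-!  If the colimit of the infinitesimal thickenings `Y_n = Spec (A/Iⁿ)` of a
closed subscheme `Y ⊆ X = Spec A` is representable by a scheme `Z` of finite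
type, then the tower of thickenings stabilizes: `I^N = I^{N+1}` for some `N`,
and `Z = Y_N`.

We work with affine schemes over `ℂ`: `B`-points of `Y_n` are `ℂ`-algebra maps
`A → B` killing `Iⁿ`, so the functor `colim Y_*` sends `B` to
`{f : A →ₐ[ℂ] B | ∃ n, f(Iⁿ) = 0}`.  Representability by a finite type scheme
`Z = Spec C` (with `C` a finitely generated `ℂ`-algebra) is expressed by a
natural family of bijections `e`. -/
theorem thickenings_stabilize
    (A : Type) [CommRing A] [Algebra ℂ A] (I : Ideal A)
    (C : Type) [CommRing C] [Algebra ℂ C] (hC : Algebra.FiniteType ℂ C)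
    (e : ∀ (B : Type) [CommRing B] [Algebra ℂ B],
      (C →ₐ[ℂ] B) ≃ {f : A →ₐ[ℂ] B // ∃ n : ℕ, ∀ x ∈ I ^ n, f x = 0})
    (hnat : ∀ (B B' : Type) [CommRing B] [Algebra ℂ B] [CommRing B'] [Algebra ℂ B']
      (g : B →ₐ[ℂ] B') (φ : C →ₐ[ℂ] B),
      ((e B' (g.comp φ) : {f : A →ₐ[ℂ] B' // ∃ n : ℕ, ∀ x ∈ I ^ n, f x = 0}) : A →ₐ[ℂ] B')
        = g.comp ((e B φ : {f : A →ₐ[ℂ] B // ∃ n : ℕ, ∀ x ∈ I ^ n, f x = 0}) : A →ₐ[ℂ] B)) :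
    ∃ N : ℕ, I ^ N = I ^ (N + 1) ∧ Nonempty (C ≃ₐ[ℂ] (A ⧸ I ^ N)) := by
  classical
  -- the universal point ι : A → C
  set ι : A →ₐ[ℂ] C := ((e C (AlgHom.id ℂ C)) : {f : A →ₐ[ℂ] C // ∃ n : ℕ, ∀ x ∈ I ^ n, f x = 0}).1 with hι
  obtain ⟨N, hN⟩ := ((e C (AlgHom.id ℂ C)) : {f : A →ₐ[ℂ] C // ∃ n : ℕ, ∀ x ∈ I ^ n, f x = 0}).2
  rw [← hι] at hN
  -- Yoneda: e B φ = φ ∘ ι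
  have key : ∀ (B : Type) [CommRing B] [Algebra ℂ B] (φ : C →ₐ[ℂ] B),
      (↑(e B φ) : A →ₐ[ℂ] B) = φ.comp ι := by
    intro B _ _ φ
    have h := hnat C B φ (AlgHom.id ℂ C)
    rw [← hι] at h
    simpa using h
  have key' : ∀ (B : Type) [CommRing B] [Algebra ℂ B]
      (x : {f : A →ₐ[ℂ] B // ∃ n : ℕ, ∀ x ∈ I ^ n, f x = 0}),
      (x : A →ₐ[ℂ] B) = ((e B).symm x).comp ι := by
    intro B _ _ x
    conv_lhs => rw [← (e B).apply_symm_apply x]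
    exact key B _
  refine ⟨N, ?_, ?_⟩
  · -- stabilization
    refine le_antisymm ?_ (Ideal.pow_le_pow_right (by omega))
    intro x hx
    set q : A →ₐ[ℂ] A ⧸ I ^ (N + 1) := Ideal.Quotient.mkₐ ℂ (I ^ (N + 1)) with hq
    have hqF : ∃ n : ℕ, ∀ x ∈ I ^ n, q x = 0 :=
      ⟨N + 1, fun x hx => by simpa [hq] using (Ideal.Quotient.eq_zero_iff_mem).2 hx⟩
    have h1 : q = ((e (A ⧸ I ^ (N + 1))).symm ⟨q, hqF⟩).comp ι :=
      key' (A ⧸ I ^ (N + 1)) ⟨q, hqF⟩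
    have hq0 : q x = 0 := by
      rw [h1]
      simp [AlgHom.comp_apply, hN x hx]
    simpa [hq] using (Ideal.Quotient.eq_zero_iff_mem).1 (by simpa [hq] using hq0)
  · -- the isomorphism C ≃ A ⧸ I ^ N
    set π : A ⧸ I ^ N →ₐ[ℂ] C := Ideal.Quotient.liftₐ (I ^ N) ι hN with hπ
    set q' : A →ₐ[ℂ] A ⧸ I ^ N := Ideal.Quotient.mkₐ ℂ (I ^ N) with hq'
    have hq'F : ∃ n : ℕ, ∀ x ∈ I ^ n, q' x = 0 :=
      ⟨N, fun x hx => by simpa [hq'] using (Ideal.Quotient.eq_zero_iff_mem).2 hx⟩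
    set φ' := (e (A ⧸ I ^ N)).symm ⟨q', hq'F⟩ with hφ'
    have h1 : q' = φ'.comp ι := key' (A ⧸ I ^ N) ⟨q', hq'F⟩
    have left : φ'.comp π = AlgHom.id ℂ (A ⧸ I ^ N) := by
      apply Ideal.Quotient.algHom_ext
      ext a
      have := congrArg (fun f => (f : A →ₐ[ℂ] A ⧸ I ^ N) a) h1
      simp only [AlgHom.comp_apply] at this ⊢
      simp [hπ, hq', ← this]
      exact this.symm
    have right : π.comp φ' = AlgHom.id ℂ C := by
      apply (e C).injective
      apply Subtype.ext
      rw [key C (π.comp φ'), key C (AlgHom.id ℂ C), AlgHom.comp_assoc, ← h1]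
      ext a
      simp [hπ, hq', AlgHom.comp_apply]
      rfl
    exact ⟨AlgEquiv.ofAlgHom φ' π left right⟩
end

section
/- Consider the quiver Q with 9 vertices {0,…,8} and arrows 0→1, 2→0, 0→7, 8→0, 1→3, 3→2, 4→3, 3→5, 6→4, 5→6, 7→6, 6→8. Its simple cycles are exactly three 4-cycles and two 6-cycles, and every arrow lies on exactly one 4-cycle and exactly one 6-cycle. Consequently, there is no weighting w: Q₁ → ℤ of the arrows and positive integer d > 0 such that every simple cycle has total weight d. -/
/-!  The 9-vertex quiver with arrows
`0→1, 2→0, 0→7, 8→0, 1→3, 3→2, 4→3, 3→5, 6→4, 5→6, 7→6, 6→8`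
admits no integer weighting of its arrows making every simple cycle have the
same positive total weight.  (Its simple cycles are three 4-cycles and two
6-cycles, each arrow lying on exactly one of each; summing the cycle-weight
equations gives `3d = 2d`, so `d = 0`.)

A simple cycle is a nonempty list of arrows, consecutively composable and
closing up, visiting no vertex twice. -/

/-- `l` is a simple (directed) cycle of the quiver with arrow set `A`,
source map `src` and target map `tgt`. -/
def IsSimpleCycle {A V : Type} (src tgt : A → V) (l : List A) : Prop :=
  l ≠ [] ∧ List.Chain' (fun x y => tgt x = src y) l ∧
  (∀ h : l ≠ [], tgt (l.getLast h) = src (l.head h)) ∧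
  (l.map src).Nodup

/-- Sources of the 12 arrows, in the order listed above. -/
def src9 : Fin 12 → Fin 9 := ![0, 2, 0, 8, 1, 3, 4, 3, 6, 5, 7, 6]

/-- Targets of the 12 arrows, in the order listed above. -/
def tgt9 : Fin 12 → Fin 9 := ![1, 0, 7, 0, 3, 2, 3, 5, 4, 6, 6, 8]

lemma cyc1 : IsSimpleCycle src9 tgt9 [0,4,5,1] := ⟨by simp, by simp only [List.Chain', List.isChain_cons_cons, List.isChain_singleton, src9, tgt9]; decide, fun _ => by rfl, by decide⟩
lemma cyc2 : IsSimpleCycle src9 tgt9 [6,7,9,8] := ⟨by simp, by simp only [List.Chain', List.isChain_cons_cons, List.isChain_singleton, src9, tgt9]; decide, fun _ => by rfl, by decide⟩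
lemma cyc3 : IsSimpleCycle src9 tgt9 [2,10,11,3] := ⟨by simp, by simp only [List.Chain', List.isChain_cons_cons, List.isChain_singleton, src9, tgt9]; decide, fun _ => by rfl, by decide⟩
lemma cyc4 : IsSimpleCycle src9 tgt9 [0,4,7,9,11,3] := ⟨by simp, by simp only [List.Chain', List.isChain_cons_cons, List.isChain_singleton, src9, tgt9]; decide, fun _ => by rfl, by decide⟩
lemma cyc5 : IsSimpleCycle src9 tgt9 [2,10,8,6,5,1] := ⟨by simp, by simp only [List.Chain', List.isChain_cons_cons, List.isChain_singleton, src9, tgt9]; decide, fun _ => by rfl, by decide⟩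

theorem no_positive_cycle_grading_nine_vertex_quiver :
    ¬ ∃ (w : Fin 12 → ℤ) (d : ℤ), 0 < d ∧
      ∀ l : List (Fin 12), IsSimpleCycle src9 tgt9 l → (l.map w).sum = d := by
  rintro ⟨w, d, hd, hw⟩
  have h1 := hw _ cyc1
  have h2 := hw _ cyc2
  have h3 := hw _ cyc3
  have h4 := hw _ cyc4
  have h5 := hw _ cyc5
  simp [List.map, List.sum_cons] at h1 h2 h3 h4 h5
  linarith
end

section
/- Consider the quiver Q with 5 vertices {0,1,2,3,4} and arrows 1→2, 3→1, 1→4, 0→1, 2→3, 4→2, 2→0, 3→4, 0→3, 4→0 (the arrows of two oppositely oriented 5-cycles' chords pattern as given). There is no weighting w: Q₁ → ℤ of the arrows such that all simple cycles of Q have the same positive total weight. -/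
/-- Sources of the 10 arrows, in the order listed above. -/
def src5 : Fin 10 → Fin 5 := ![1, 3, 1, 0, 2, 4, 2, 3, 0, 4]

/-- Targets of the 10 arrows, in the order listed above. -/
def tgt5 : Fin 10 → Fin 5 := ![2, 1, 4, 1, 3, 2, 0, 4, 3, 0]

theorem no_positive_cycle_grading_five_vertex_quiver :
    ¬ ∃ (w : Fin 10 → ℤ) (d : ℤ), 0 < d ∧
      ∀ l : List (Fin 10), IsSimpleCycle src5 tgt5 l → (l.map w).sum = d := by
  rintro ⟨w, d, hd, hw⟩
  have hA := hw [0, 4, 1] ⟨by decide, by simp only [List.Chain', List.isChain_cons_cons, List.isChain_singleton]; decide, fun _ => rfl, by decide⟩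
  have hB := hw [0, 6, 3] ⟨by decide, by simp only [List.Chain', List.isChain_cons_cons, List.isChain_singleton]; decide, fun _ => rfl, by decide⟩
  have hC := hw [7, 9, 8] ⟨by decide, by simp only [List.Chain', List.isChain_cons_cons, List.isChain_singleton]; decide, fun _ => rfl, by decide⟩
  have hD := hw [0, 4, 7, 9, 3] ⟨by decide, by simp only [List.Chain', List.isChain_cons_cons, List.isChain_singleton]; decide, fun _ => rfl, by decide⟩
  have hE := hw [0, 6, 8, 1] ⟨by decide, by simp only [List.Chain', List.isChain_cons_cons, List.isChain_singleton]; decide, fun _ => rfl, by decide⟩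
  simp only [List.map_cons, List.map_nil, List.sum_cons, List.sum_nil] at hA hB hC hD hE
  linarith
end

section
/- Let A be a finitely generated commutative ℂ-algebra whose nilradical N satisfies N^r = 0, and let J be an associative ℂ-algebra with augmentation ideal J_{≥1} (spanned by paths of length ≥ 1 in a path algebra quotient). Let F be a finite projective A-module with a J-action by A-endomorphisms. If for every minimal prime p of A the action of J_{≥1} on F ⊗ κ(p) is nilpotent of order ≤ m, then the action of J_{≥1} on F is nilpotent of order at most m·r. -/
/-!  Nilpotence of a module action can be checked at the geometric generic
points, with controlled order.

`A` is a finitely generated commutative `ℂ`-algebra whose nilradical `N`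
satisfies `N^r = 0`; `J` is an associative `ℂ`-algebra and `J₁ ⊆ J` its
augmentation ideal (a two-sided ideal); `F` is a finite projective `A`-module
with a `J`-action by `A`-endomorphisms, given by the ring homomorphism `ρ`.
For a minimal prime `p` of `A`, the residue field is
`κ(p) = Frac(A/p)`, and the action of `J₁` on `F ⊗_A κ(p)` (obtained by base
change of endomorphisms) is assumed nilpotent of order `≤ m`, i.e. any product
of `m` elements of `J₁` acts by `0` there.  Conclusion: any product of `m·r`
elements of `J₁` acts by `0` on `F` itself. -/
set_option maxHeartbeats 1000000 in
set_option synthInstance.maxHeartbeats 200000 in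
theorem nilpotence_checked_at_geometric_points
    (A : Type) [CommRing A] [Algebra ℂ A] (hA : Algebra.FiniteType ℂ A)
    (r : ℕ) (hr : nilradical A ^ r = ⊥)
    (J : Type) [Ring J] [Algebra ℂ J] (J₁ : Set J)
    (hJ₁ : ∀ x ∈ J₁, ∀ y : J, x * y ∈ J₁ ∧ y * x ∈ J₁)
    (F : Type) [AddCommGroup F] [Module A F]
    [Module.Finite A F] [Module.Projective A F]
    (ρ : J →+* Module.End A F)
    (m : ℕ)
    (hfib : ∀ p : Ideal A, p ∈ minimalPrimes A →
      ∀ (K : Type) [Field K] [Algebra (A ⧸ p) K] [IsFractionRing (A ⧸ p) K]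
        [Algebra A K] [IsScalarTower A (A ⧸ p) K],
      ∀ js : Fin m → J, (∀ i, js i ∈ J₁) →
        LinearMap.baseChange K
          (((List.ofFn fun i => ρ (js i)).prod : Module.End A F) : F →ₗ[A] F) = 0) :
    ∀ js : Fin (m * r) → J, (∀ i, js i ∈ J₁) →
      ((List.ofFn fun i => ρ (js i)).prod : Module.End A F) = 0 := by
  classical
  obtain ⟨n, π, hπ⟩ := Module.Finite.exists_fin' A F
  obtain ⟨ι, hι⟩ := π.exists_rightInverse_of_surjective (LinearMap.range_eq_top.2 hπ)
  have hιπ : ∀ x : F, π (ι x) = x := fun x => DFunLike.congr_fun hι x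
  set N : Ideal A := nilradical A with hN
  -- membership in smul of top for pi types
  have pimem : ∀ (q : Ideal A) (y : Fin n → A), (∀ i, y i ∈ q) →
      y ∈ q • (⊤ : Submodule A (Fin n → A)) := by
    intro q y hy
    rw [pi_eq_sum_univ y]
    refine Submodule.sum_mem _ fun i _ => Submodule.smul_mem_smul (hy i) trivial
  -- Key pointwise lemma
  have key : ∀ (f : F →ₗ[A] F),
      (∀ (p : Ideal A), p ∈ minimalPrimes A →
        ∀ (K : Type) [Field K] [Algebra (A ⧸ p) K] [IsFractionRing (A ⧸ p) K]
          [Algebra A K] [IsScalarTower A (A ⧸ p) K], LinearMap.baseChange K f = 0) →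
      ∀ x : F, f x ∈ N • (⊤ : Submodule A F) := by
    intro f hf x
    have hcoord : ∀ i : Fin n, ι (f x) i ∈ N := by
      intro i
      have hmem : ι (f x) i ∈ sInf (minimalPrimes A) := by
        rw [Ideal.mem_sInf]
        intro p hp
        haveI : p.IsPrime := hp.1.1
        letI K := FractionRing (A ⧸ p)
        have h0 := hf p hp K
        have h1 : ((1 : K) ⊗ₜ[A] (f x) : TensorProduct A K F) = 0 := by
          have := DFunLike.congr_fun h0 ((1 : K) ⊗ₜ[A] x)
          simpa [LinearMap.baseChange_tmul] using this
        have h2 : (ι (f x) i) • (1 : K) = 0 := by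
          have := congrArg (fun z => (TensorProduct.rid A K)
            ((LinearMap.lTensor K
              ((LinearMap.proj i : (Fin n → A) →ₗ[A] A) ∘ₗ ι)) z)) h1
          simpa [LinearMap.lTensor_tmul, TensorProduct.rid_tmul] using this
        have h3 : algebraMap A K (ι (f x) i) = 0 := by
          rw [Algebra.algebraMap_eq_smul_one]; exact h2
        have h4 : algebraMap (A ⧸ p) K (Ideal.Quotient.mk p (ι (f x) i)) = 0 := by
          rw [← Ideal.Quotient.algebraMap_eq, ← IsScalarTower.algebraMap_apply]
          exact h3
        have h5 : Ideal.Quotient.mk p (ι (f x) i) = 0 :=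
          IsFractionRing.injective (A ⧸ p) K (by simpa using h4)
        exact Ideal.Quotient.eq_zero_iff_mem.mp h5
      rwa [minimalPrimes, Ideal.sInf_minimalPrimes] at hmem
    have hι' : ι (f x) ∈ N • (⊤ : Submodule A (Fin n → A)) := pimem N _ hcoord
    have := Submodule.mem_map_of_mem (f := π) hι'
    rw [Submodule.map_smul''] at this
    have hle : N • Submodule.map π (⊤ : Submodule A (Fin n → A)) ≤
        N • (⊤ : Submodule A F) := Submodule.smul_mono le_rfl le_top
    have := hle this
    rwa [hιπ] at this
  -- main induction
  have main : ∀ (k : ℕ) (js : Fin (m * k) → J), (∀ i, js i ∈ J₁) →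
      ∀ x : F, ((List.ofFn fun i => ρ (js i)).prod : Module.End A F) x ∈
        (N ^ k) • (⊤ : Submodule A F) := by
    intro k
    induction k with
    | zero =>
      intro js hjs x
      rw [pow_zero, Ideal.one_eq_top, Submodule.top_smul]
      trivial
    | succ k IH =>
      intro js hjs x
      have hsplit : (List.ofFn fun i : Fin (m * k + m) => ρ (js i)) =
          (List.ofFn fun i : Fin (m * k) => ρ (js (Fin.castAdd m i))) ++
          (List.ofFn fun i : Fin m => ρ (js (Fin.natAdd (m * k) i))) :=
        List.ofFn_add (f := fun i => ρ (js i))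
      have hprod : ((List.ofFn fun i => ρ (js i)).prod : Module.End A F) =
          ((List.ofFn fun i : Fin (m * k) => ρ (js (Fin.castAdd m i))).prod) *
          ((List.ofFn fun i : Fin m => ρ (js (Fin.natAdd (m * k) i))).prod) := by
        rw [show (List.ofFn fun i => ρ (js i)) =
          (List.ofFn fun i : Fin (m * k + m) => ρ (js i)) from rfl, hsplit,
          List.prod_append]
      rw [hprod]
      set P₁ : Module.End A F :=
        (List.ofFn fun i : Fin (m * k) => ρ (js (Fin.castAdd m i))).prod with hP₁
      set P₂ : Module.End A F :=
        (List.ofFn fun i : Fin m => ρ (js (Fin.natAdd (m * k) i))).prod with hP₂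
      have h₂ : P₂ x ∈ N • (⊤ : Submodule A F) := by
        refine key P₂ ?_ x
        intro p hp K _ _ _ _ _
        exact hfib p hp K (fun i => js (Fin.natAdd (m * k) i)) (fun i => hjs _)
      have hrange : Submodule.map (P₁ : F →ₗ[A] F) (⊤ : Submodule A F) ≤
          (N ^ k) • (⊤ : Submodule A F) := by
        rintro y ⟨z, -, rfl⟩
        exact IH _ (fun i => hjs _) z
      have : (P₁ * P₂) x = P₁ (P₂ x) := rfl
      rw [this]
      have hmem : P₁ (P₂ x) ∈ Submodule.map (P₁ : F →ₗ[A] F) (N • ⊤) :=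
        Submodule.mem_map_of_mem h₂
      rw [Submodule.map_smul''] at hmem
      have hle : N • Submodule.map (P₁ : F →ₗ[A] F) (⊤ : Submodule A F) ≤
          N • ((N ^ k) • (⊤ : Submodule A F)) := Submodule.smul_mono le_rfl hrange
      have hmem2 := hle hmem
      rwa [← Submodule.smul_assoc, smul_eq_mul, ← pow_succ'] at hmem2
  intro js hjs
  ext x
  have := main r js hjs x
  rw [hr, Submodule.bot_smul] at this
  simpa using this
end

section
/- Let Q be a full subquiver of a quiver Q' (both finite, without loops), and define the restriction of a potential W on Q' to Q by keeping only those cycles lying entirely in Q, with the same coefficients. Then for any vertex i of Q, premutation at i commutes with restriction: μ'_i(W)|_Q = μ'_i(W|_Q), where on the left premutation is taken in Q' and restriction is to the premutated quiver μ'_i(Q) ⊆ μ'_i(Q'). -/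
/-!  Premutation commutes with restriction to a full subquiver.

A potential on a quiver with arrow set `A` is recorded as a coefficient
function `W : List A → ℂ` on cyclic paths (lists of arrows).  A full subquiver
is determined by a subset `S` of the vertices; its arrows are exactly the
ambient arrows with both endpoints in `S`, and restriction of a potential keeps
only cycles lying in the subquiver.

The premutated quiver at a vertex `i` has arrows `A ⊕ A × A`: `Sum.inl a` is
the arrow `a` (reversed, if adjacent to `i`), `Sum.inr (a, b)` is the composite
`[ab]` for a length-two path `b`-then-`a` through `i` (`tgt b = i = src a`);
`[ab]` runs from `src b` to `tgt a`.  The premutated potential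
`μ'_i(W) = W_i + Σ [ab] b̄ ā` is computed within the (sub)quiver determined by
`S`: the coefficient of a cycle `L` is `W` evaluated on the expansion of `L`
(if `L` involves no arrow adjacent to `i` other than through composites), plus
`1` for each correction triple `[ab]·b̄·ā` with `a, b` arrows of the subquiver.
The ambient premutation is `premut src tgt Set.univ i W`.  The theorem:
restricting the ambient premutated potential to the subquiver equals the
premutation, within the subquiver, of the restricted potential. -/

namespace PremutRestrict

variable {V A : Type}

open Classical in
/-- Restriction of a potential to the full subquiver on the vertex set `S`. -/
noncomputable def restrictPot (src tgt : A → V) (S : Set V) (W : List A → ℂ) :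
    List A → ℂ :=
  fun l => if ∀ e ∈ l, src e ∈ S ∧ tgt e ∈ S then W l else 0

/-- Expansion of a premutated arrow into the arrows of `Q` it involves
(in travel order: `[ab]` expands to `b` then `a`). -/
def expandArrow : A ⊕ A × A → List A
  | Sum.inl a => [a]
  | Sum.inr (a, b) => [b, a]

/-- The premutated arrow may occur in a cycle of the premutated potential:
composites must genuinely pass through `i`, and plain arrows must avoid `i`. -/
def validArrow (src tgt : A → V) (i : V) : A ⊕ A × A → Prop
  | Sum.inl a => src a ≠ i ∧ tgt a ≠ i
  | Sum.inr (a, b) => src a = i ∧ tgt b = i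

/-- The premutated arrow belongs to the premutation of the full subquiver
on `S`. -/
def inSub (src tgt : A → V) (S : Set V) : A ⊕ A × A → Prop
  | Sum.inl a => src a ∈ S ∧ tgt a ∈ S
  | Sum.inr (a, b) => src a ∈ S ∧ tgt a ∈ S ∧ src b ∈ S ∧ tgt b ∈ S

open Classical in
/-- The premutated potential `μ'_i(W) = W_i + Σ_{s(a)=t(b)=i} [ab] b̄ ā`,
computed within the full subquiver on the vertex set `S`. -/
noncomputable def premut (src tgt : A → V) (S : Set V) (i : V)
    (W : List A → ℂ) : List (A ⊕ A × A) → ℂ :=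
  fun L =>
    (@ite ℂ (∀ x ∈ L, validArrow src tgt i x) (Classical.propDecidable _)
      (W (L.flatMap expandArrow)) 0) +
    (@ite ℂ (∃ a b : A, inSub src tgt S (Sum.inr (a, b)) ∧ src a = i ∧ tgt b = i ∧
        L = [Sum.inr (a, b), Sum.inl b, Sum.inl a]) (Classical.propDecidable _) 1 0)

open Classical in
/-- Restriction of a potential on the premutated quiver to the premutated
subquiver on `S`. -/
noncomputable def restrictPotMu (src tgt : A → V) (S : Set V)
    (X : List (A ⊕ A × A) → ℂ) : List (A ⊕ A × A) → ℂ :=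
  fun L => @ite ℂ (∀ x ∈ L, inSub src tgt S x) (Classical.propDecidable _) (X L) 0

/-- Premutation at a vertex `i` of the full subquiver commutes with
restriction: `μ'_i(W)|_Q = μ'_i(W|_Q)`. -/
theorem premutation_commutes_with_restriction
    (src tgt : A → V) (S : Set V) (i : V) (hi : i ∈ S) (W : List A → ℂ) :
    restrictPotMu src tgt S (premut src tgt Set.univ i W)
      = premut src tgt S i (restrictPot src tgt S W) := by
  classical
  funext L
  unfold restrictPotMu premut restrictPot
  have key : (∀ x ∈ L, inSub src tgt S x) ↔
      (∀ e ∈ L.flatMap expandArrow, src e ∈ S ∧ tgt e ∈ S) := by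
    constructor
    · intro h e he
      simp only [List.mem_flatMap] at he
      obtain ⟨x, hx, hex⟩ := he
      have hs := h x hx
      cases x with
      | inl a =>
        simp only [expandArrow, List.mem_singleton] at hex
        subst hex; exact hs
      | inr p =>
        obtain ⟨a, b⟩ := p
        simp only [expandArrow, List.mem_cons, List.mem_singleton,
          List.not_mem_nil, or_false] at hex
        rcases hex with h1 | h1 <;> subst h1
        · exact ⟨hs.2.2.1, hs.2.2.2⟩
        · exact ⟨hs.1, hs.2.1⟩
    · intro h x hx
      cases x with
      | inl a =>
        exact h a (List.mem_flatMap.mpr ⟨_, hx, by simp [expandArrow]⟩)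
      | inr p =>
        obtain ⟨a, b⟩ := p
        have ha := h a (List.mem_flatMap.mpr ⟨_, hx, by simp [expandArrow]⟩)
        have hb := h b (List.mem_flatMap.mpr ⟨_, hx, by simp [expandArrow]⟩)
        exact ⟨ha.1, ha.2, hb.1, hb.2⟩
  rcases Classical.em (∀ x ∈ L, inSub src tgt S x) with hS | hS
  · rw [if_pos hS]
    congr 1
    · rcases Classical.em (∀ x ∈ L, validArrow src tgt i x) with hv | hv
      · rw [if_pos hv, if_pos hv, if_pos (key.mp hS)]
      · rw [if_neg hv, if_neg hv]
    · refine if_congr ?_ rfl rfl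
      constructor
      · rintro ⟨a, b, _, h1, h2, h3⟩
        refine ⟨a, b, ?_, h1, h2, h3⟩
        have := hS (Sum.inr (a, b)) (by rw [h3]; simp)
        exact this
      · rintro ⟨a, b, hin, h1, h2, h3⟩
        exact ⟨a, b, ⟨Set.mem_univ _, Set.mem_univ _, Set.mem_univ _, Set.mem_univ _⟩,
          h1, h2, h3⟩
  · rw [if_neg hS]
    symm
    have h2 : ¬∃ a b : A, inSub src tgt S (Sum.inr (a, b)) ∧ src a = i ∧ tgt b = i ∧
        L = [Sum.inr (a, b), Sum.inl b, Sum.inl a] := by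
      rintro ⟨a, b, hin, _, _, h3⟩
      apply hS
      intro x hx
      rw [h3] at hx
      simp only [List.mem_cons, List.not_mem_nil, or_false] at hx
      rcases hx with rfl | rfl | rfl
      · exact hin
      · exact ⟨hin.2.2.1, hin.2.2.2⟩
      · exact ⟨hin.1, hin.2.1⟩
    rw [if_neg h2, add_zero]
    rcases Classical.em (∀ x ∈ L, validArrow src tgt i x) with hv | hv
    · rw [if_pos hv, if_neg (fun h => hS (key.mpr h))]
    · rw [if_neg hv]

end PremutRestrict
end
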